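/- Let R be a commutative ring, z₀ ∈ R, and Z an (n−d)×d matrix over R. Let M be the n×d matrix whose top d×d block is z₀ times the identity matrix and whose bottom (n−d)×d block is Z. Then for every d-element subset I ⊆ {1,…,n} with deg I = k there is a sign ε ∈ {1,−1} (depending only on I) such that det(M_I) = ε · z₀^{d−k} · det(Z′), where M_I is the d×d submatrix of M on the rows indexed by I, and Z′ is the k×k submatrix of Z with rows {i−d : i ∈ I, i > d} and columns {1,…,d}∖(I∩{1,…,d}). -/
import Mathlib

open Finset Matrix

/-- The degree of a subset `I ⊆ {1,…,n}` (0-indexed: `deg I = #{i ∈ I : i ≥ d}`). -/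
def degS (n d : ℕ) (I : Finset (Fin n)) : ℕ := (I.filter fun i : Fin n => d ≤ i.val).card

/-- The row set of `Z′`: `{i − d : i ∈ I, i > d}`, as a subset of `Fin (n - d)`. -/
def rowsZ (n d : ℕ) (I : Finset (Fin n)) : Finset (Fin (n - d)) :=
  Finset.univ.filter fun t : Fin (n - d) => ∃ i ∈ I, i.val = t.val + d

/-- The column set of `Z′`: `{1,…,d} ∖ (I ∩ {1,…,d})`, as a subset of `Fin d`. -/
def colsZ (n d : ℕ) (I : Finset (Fin n)) : Finset (Fin d) :=
  Finset.univ.filter fun j : Fin d => ∀ i ∈ I, i.val ≠ j.val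

/-- The `n × d` matrix whose top `d × d` block is `z₀ · Id` and whose bottom
`(n−d) × d` block is `Z`. -/
def Mmat (n d : ℕ) (R : Type*) [CommRing R] (z₀ : R)
    (Z : Matrix (Fin (n - d)) (Fin d) R) : Matrix (Fin n) (Fin d) R :=
  Matrix.of fun i j =>
    if h : i.val < d then (if i.val = j.val then z₀ else 0)
    else Z ⟨i.val - d, by have := i.isLt; omega⟩ j


lemma enum_eq {m : ℕ} {f g : Fin m → ℕ} {S : Finset ℕ} (hS : S.card = m)
    (hf : StrictMono f) (hg : StrictMono g)
    (hfS : ∀ x, f x ∈ S) (hgS : ∀ x, g x ∈ S) : f = g := by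
  rw [Finset.orderEmbOfFin_unique hS hfS hf, Finset.orderEmbOfFin_unique hS hgS hg]

theorem stmt11 (n d : ℕ) (hd1 : 1 ≤ d) (hdn : d ≤ n - d)
    (I : Finset (Fin n)) (hI : I.card = d) (k : ℕ) (hk : degS n d I = k)
    (hRZ : (rowsZ n d I).card = k) (hCZ : (colsZ n d I).card = k) :
    ∃ ε : ℤ, (ε = 1 ∨ ε = -1) ∧
      ∀ (R : Type) [CommRing R] (z₀ : R) (Z : Matrix (Fin (n - d)) (Fin d) R),
        ((Mmat n d R z₀ Z).submatrix
            (fun p : Fin d => (I.orderIsoOfFin hI p : Fin n)) id).det =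
          (ε : R) * z₀ ^ (d - k) *
            (Matrix.of fun p q : Fin k =>
              Z ((rowsZ n d I).orderIsoOfFin hRZ p)
                ((colsZ n d I).orderIsoOfFin hCZ q)).det := by
  classical
  have hkd : k ≤ d := by
    rw [← hk, ← hI]; exact Finset.card_filter_le _ _
  set m := d - k with hm
  set IL := I.filter (fun i : Fin n => i.val < d) with hILdef
  set IR := I.filter (fun i : Fin n => d ≤ i.val) with hIRdef
  have hIR : IR.card = k := hk
  have hIL : IL.card = m := by
    have h1 := Finset.card_filter_add_card_filter_not
      (s := I) (p := fun i : Fin n => i.val < d)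
    have h2 : I.filter (fun i : Fin n => ¬ i.val < d) = IR := by
      apply Finset.filter_congr; intro i _; simp [not_lt]
    rw [h2, hIR, hI] at h1
    rw [hILdef]; omega
  set colsI := (Finset.univ.filter fun j : Fin d => ∃ i ∈ I, i.val = j.val) with hcolsIdef
  have hCI : colsI.card = m := by
    have h1 := Finset.card_filter_add_card_filter_not
      (s := (Finset.univ : Finset (Fin d))) (p := fun j : Fin d => ∃ i ∈ I, i.val = j.val)
    have h2 : (Finset.univ.filter fun j : Fin d => ¬ ∃ i ∈ I, i.val = j.val) = colsZ n d I := by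
      apply Finset.filter_congr; intro j _
      simp [colsZ]
    rw [h2, hCZ] at h1
    simp only [Finset.card_univ, Fintype.card_fin] at h1
    rw [hcolsIdef]; omega
  -- row map
  have memIL : ∀ a : Fin m, IL.orderEmbOfFin hIL a ∈ I :=
    fun a => Finset.mem_of_mem_filter _ (Finset.orderEmbOfFin_mem IL hIL a)
  have memIR : ∀ b : Fin k, IR.orderEmbOfFin hIR b ∈ I :=
    fun b => Finset.mem_of_mem_filter _ (Finset.orderEmbOfFin_mem IR hIR b)
  have hILlt : ∀ a : Fin m, (IL.orderEmbOfFin hIL a : Fin n).val < d := by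
    intro a
    exact (Finset.mem_filter.mp (Finset.orderEmbOfFin_mem IL hIL a)).2
  have hIRge : ∀ b : Fin k, d ≤ (IR.orderEmbOfFin hIR b : Fin n).val := by
    intro b
    exact (Finset.mem_filter.mp (Finset.orderEmbOfFin_mem IR hIR b)).2
  let re : Fin m ⊕ Fin k → Fin d := Sum.elim
    (fun a => (I.orderIsoOfFin hI).symm ⟨IL.orderEmbOfFin hIL a, memIL a⟩)
    (fun b => (I.orderIsoOfFin hI).symm ⟨IR.orderEmbOfFin hIR b, memIR b⟩)
  have reInj : Function.Injective re := by
    intro x y hxy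
    match x, y with
    | Sum.inl a, Sum.inl a' =>
      simp only [re, Sum.elim_inl, EmbeddingLike.apply_eq_iff_eq, Subtype.mk.injEq] at hxy
      exact congrArg Sum.inl hxy
    | Sum.inr b, Sum.inr b' =>
      simp only [re, Sum.elim_inr, EmbeddingLike.apply_eq_iff_eq, Subtype.mk.injEq] at hxy
      exact congrArg Sum.inr hxy
    | Sum.inl a, Sum.inr b =>
      simp only [re, Sum.elim_inl, Sum.elim_inr, EmbeddingLike.apply_eq_iff_eq,
        Subtype.mk.injEq] at hxy
      have h1 := hILlt a
      have h2 := hIRge b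
      rw [hxy] at h1; omega
    | Sum.inr b, Sum.inl a =>
      simp only [re, Sum.elim_inl, Sum.elim_inr, EmbeddingLike.apply_eq_iff_eq,
        Subtype.mk.injEq] at hxy
      have h1 := hILlt a
      have h2 := hIRge b
      rw [hxy] at h2; omega
  have cardsum : Fintype.card (Fin m ⊕ Fin k) = Fintype.card (Fin d) := by
    simp; omega
  let eR : Fin m ⊕ Fin k ≃ Fin d :=
    Equiv.ofBijective re ((Fintype.bijective_iff_injective_and_card re).2 ⟨reInj, cardsum⟩)
  -- column map
  have memCI : ∀ a : Fin m, ∃ i ∈ I, i.val = (colsI.orderEmbOfFin hCI a : Fin d).val := by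
    intro a
    exact (Finset.mem_filter.mp (Finset.orderEmbOfFin_mem colsI hCI a)).2
  have memCZ : ∀ b : Fin k, ∀ i ∈ I, i.val ≠ ((colsZ n d I).orderEmbOfFin hCZ b : Fin d).val := by
    intro b
    exact (Finset.mem_filter.mp (Finset.orderEmbOfFin_mem (colsZ n d I) hCZ b)).2
  let ce : Fin m ⊕ Fin k → Fin d := Sum.elim
    (fun a => colsI.orderEmbOfFin hCI a)
    (fun b => (colsZ n d I).orderEmbOfFin hCZ b)
  have ceInj : Function.Injective ce := by
    intro x y hxy
    match x, y with
    | Sum.inl a, Sum.inl a' =>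
      exact congrArg Sum.inl ((colsI.orderEmbOfFin hCI).injective hxy)
    | Sum.inr b, Sum.inr b' =>
      exact congrArg Sum.inr (((colsZ n d I).orderEmbOfFin hCZ).injective hxy)
    | Sum.inl a, Sum.inr b =>
      exfalso
      obtain ⟨i, hi, hival⟩ := memCI a
      exact memCZ b i hi (by rw [hival]; exact congrArg Fin.val hxy)
    | Sum.inr b, Sum.inl a =>
      exfalso
      obtain ⟨i, hi, hival⟩ := memCI a
      exact memCZ b i hi (by rw [hival]; exact (congrArg Fin.val hxy).symm)
  let eC : Fin m ⊕ Fin k ≃ Fin d :=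
    Equiv.ofBijective ce ((Fintype.bijective_iff_injective_and_card ce).2 ⟨ceInj, cardsum⟩)
  -- value identification lemmas
  have hILC : ∀ a : Fin m, (IL.orderEmbOfFin hIL a : Fin n).val
      = (colsI.orderEmbOfFin hCI a : Fin d).val := by
    have := enum_eq (S := IL.image Fin.val)
      (f := fun a => (IL.orderEmbOfFin hIL a : Fin n).val)
      (g := fun a => (colsI.orderEmbOfFin hCI a : Fin d).val)
      (by rw [Finset.card_image_of_injective _ Fin.val_injective, hIL])
      (fun a b hab => (IL.orderEmbOfFin hIL).strictMono hab)
      (fun a b hab => (colsI.orderEmbOfFin hCI).strictMono hab)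
      (fun a => Finset.mem_image_of_mem _ (Finset.orderEmbOfFin_mem IL hIL a))
      (by
        intro a
        obtain ⟨i, hi, hival⟩ := memCI a
        have hilt : i.val < d := by
          rw [hival]; exact (colsI.orderEmbOfFin hCI a).isLt
        have hmem : i ∈ IL := Finset.mem_filter.mpr ⟨hi, hilt⟩
        show ((colsI.orderEmbOfFin hCI) a : Fin d).val ∈ IL.image Fin.val
        rw [← hival]
        exact Finset.mem_image_of_mem _ hmem)
    exact fun a => congrFun this a
  have hIRC : ∀ b : Fin k, (IR.orderEmbOfFin hIR b : Fin n).val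
      = ((rowsZ n d I).orderEmbOfFin hRZ b : Fin (n - d)).val + d := by
    have := enum_eq (S := IR.image Fin.val)
      (f := fun b => (IR.orderEmbOfFin hIR b : Fin n).val)
      (g := fun b => ((rowsZ n d I).orderEmbOfFin hRZ b : Fin (n - d)).val + d)
      (by rw [Finset.card_image_of_injective _ Fin.val_injective, hIR])
      (fun a b hab => (IR.orderEmbOfFin hIR).strictMono hab)
      (fun a b hab => by
        have h : ((rowsZ n d I).orderEmbOfFin hRZ a : Fin (n-d)).val
            < ((rowsZ n d I).orderEmbOfFin hRZ b : Fin (n-d)).val :=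
          ((rowsZ n d I).orderEmbOfFin hRZ).strictMono hab
        show ((rowsZ n d I).orderEmbOfFin hRZ a : Fin (n-d)).val + d
            < ((rowsZ n d I).orderEmbOfFin hRZ b : Fin (n-d)).val + d
        omega)
      (fun a => Finset.mem_image_of_mem _ (Finset.orderEmbOfFin_mem IR hIR a))
      (by
        intro b
        obtain ⟨-, i, hi, hival⟩ :=
          Finset.mem_filter.mp (Finset.orderEmbOfFin_mem (rowsZ n d I) hRZ b)
        have hmem : i ∈ IR := Finset.mem_filter.mpr ⟨hi, by omega⟩
        show ((rowsZ n d I).orderEmbOfFin hRZ b : Fin (n-d)).val + d ∈ IR.image Fin.val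
        rw [← hival]
        exact Finset.mem_image_of_mem _ hmem)
    exact fun b => congrFun this b
  -- the permutation and the sign
  let g : Equiv.Perm (Fin m ⊕ Fin k) := eC.trans eR.symm
  refine ⟨(Equiv.Perm.sign g : ℤˣ), by
    rcases Int.units_eq_one_or (Equiv.Perm.sign g) with h | h <;> simp [h], ?_⟩
  intro R _ z₀ Z
  set N : Matrix (Fin d) (Fin d) R := (Mmat n d R z₀ Z).submatrix
    (fun p : Fin d => (I.orderIsoOfFin hI p : Fin n)) id with hN
  set D : Matrix (Fin k) (Fin k) R := Matrix.of fun p q : Fin k =>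
    Z ((rowsZ n d I).orderIsoOfFin hRZ p) ((colsZ n d I).orderIsoOfFin hCZ q) with hD
  set C : Matrix (Fin k) (Fin m) R := Matrix.of fun p q =>
    N (eR (Sum.inr p)) (eC (Sum.inl q)) with hC
  have hblock : N.submatrix eR eC = Matrix.fromBlocks (z₀ • (1 : Matrix (Fin m) (Fin m) R)) 0 C D := by
    ext x y
    match x, y with
    | Sum.inl a, Sum.inl a' =>
      have : N (eR (Sum.inl a)) (eC (Sum.inl a')) = if a = a' then z₀ else 0 := by
        show N ((I.orderIsoOfFin hI).symm ⟨IL.orderEmbOfFin hIL a, memIL a⟩)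
          (colsI.orderEmbOfFin hCI a') = _
        rw [hN]
        simp only [Matrix.submatrix_apply, id_eq, Finset.coe_orderIsoOfFin_apply]
        have hco : (I.orderEmbOfFin hI ((I.orderIsoOfFin hI).symm
            ⟨IL.orderEmbOfFin hIL a, memIL a⟩) : Fin n) = IL.orderEmbOfFin hIL a := by
          rw [← Finset.coe_orderIsoOfFin_apply]
          exact congrArg Subtype.val ((I.orderIsoOfFin hI).apply_symm_apply _)
        rw [hco, Mmat]
        simp only [Matrix.of_apply]
        rw [dif_pos (hILlt a)]
        rw [hILC a]
        congr 1
        simp only [eq_iff_iff]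
        constructor
        · intro h
          exact (colsI.orderEmbOfFin hCI).injective (Fin.val_injective h)
        · intro h; rw [h]
      simp only [Matrix.submatrix_apply, this, Matrix.fromBlocks_apply₁₁,
        Matrix.smul_apply, Matrix.one_apply]
      split <;> simp
    | Sum.inl a, Sum.inr b =>
      show N ((I.orderIsoOfFin hI).symm ⟨IL.orderEmbOfFin hIL a, memIL a⟩)
        ((colsZ n d I).orderEmbOfFin hCZ b) = 0
      rw [hN]
      simp only [Matrix.submatrix_apply, id_eq, Finset.coe_orderIsoOfFin_apply]
      have hco : (I.orderEmbOfFin hI ((I.orderIsoOfFin hI).symm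
          ⟨IL.orderEmbOfFin hIL a, memIL a⟩) : Fin n) = IL.orderEmbOfFin hIL a := by
        rw [← Finset.coe_orderIsoOfFin_apply]
        exact congrArg Subtype.val ((I.orderIsoOfFin hI).apply_symm_apply _)
      rw [hco, Mmat]
      simp only [Matrix.of_apply]
      rw [dif_pos (hILlt a)]
      rw [if_neg (memCZ b _ (memIL a))]
    | Sum.inr p, Sum.inl q =>
      rfl
    | Sum.inr p, Sum.inr q =>
      show N ((I.orderIsoOfFin hI).symm ⟨IR.orderEmbOfFin hIR p, memIR p⟩)
        ((colsZ n d I).orderEmbOfFin hCZ q) = D p q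
      rw [hN]
      simp only [Matrix.submatrix_apply, id_eq, Finset.coe_orderIsoOfFin_apply]
      have hco : (I.orderEmbOfFin hI ((I.orderIsoOfFin hI).symm
          ⟨IR.orderEmbOfFin hIR p, memIR p⟩) : Fin n) = IR.orderEmbOfFin hIR p := by
        rw [← Finset.coe_orderIsoOfFin_apply]
        exact congrArg Subtype.val ((I.orderIsoOfFin hI).apply_symm_apply _)
      rw [hco, Mmat]
      simp only [Matrix.of_apply]
      rw [dif_neg (by have := hIRge p; omega)]
      rw [hD]
      simp only [Matrix.of_apply, Finset.coe_orderIsoOfFin_apply]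
      congr 1
      apply Fin.val_injective
      simp only
      rw [hIRC p]
      omega
  -- determinant computation
  have hsub : N.submatrix eR eC = (N.submatrix eR eR).submatrix (Equiv.refl _) g := by
    ext i j
    simp [g, Matrix.submatrix_apply]
  have hdet1 : (N.submatrix eR eC).det = (Equiv.Perm.sign g : ℤ) * N.det := by
    rw [hsub]
    have := Matrix.det_permute' g (N.submatrix eR eR)
    simpa [Matrix.det_submatrix_equiv_self] using this
  have hdet2 : (N.submatrix eR eC).det = z₀ ^ m * D.det := by
    rw [hblock, Matrix.det_fromBlocks_zero₁₂, Matrix.det_smul, Matrix.det_one]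
    simp
  have hsq : ((Equiv.Perm.sign g : ℤ) : R) * ((Equiv.Perm.sign g : ℤ) : R) = 1 := by
    rcases Int.units_eq_one_or (Equiv.Perm.sign g) with h | h <;> simp [h]
  have : N.det = ((Equiv.Perm.sign g : ℤ) : R) * (z₀ ^ m * D.det) := by
    have h := hdet1.symm.trans hdet2
    calc N.det = (((Equiv.Perm.sign g : ℤ) : R) * ((Equiv.Perm.sign g : ℤ) : R)) * N.det := by
          rw [hsq, one_mul]
      _ = ((Equiv.Perm.sign g : ℤ) : R) * (((Equiv.Perm.sign g : ℤ) : R) * N.det) := by ring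
      _ = ((Equiv.Perm.sign g : ℤ) : R) * (z₀ ^ m * D.det) := by rw [h]
  rw [this]
  ring
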